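/- For every integer p ≥ 2 and all y in (0, π/(2p)), (p/6)((1 - p²)y² + 6) < sin(py)/sin(y) < p - (4/π²)(p - 1/sin(π/(2p)))·p·y². -/

import Mathlib

open Real Set

private lemma aux_mono (F G : ℝ → ℝ) (hd : ∀ t, HasDerivAt F (G t) t)
    (hG : ∀ t, 0 ≤ t → 0 ≤ G t) {x : ℝ} (hx : 0 ≤ x) : F 0 ≤ F x := by
  have mono : MonotoneOn F (Ici 0) := by
    apply monotoneOn_of_deriv_nonneg (convex_Ici 0)
    · exact fun t _ => (hd t).differentiableAt.continuousAt.continuousWithinAt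
    · exact fun t _ => (hd t).differentiableAt.differentiableWithinAt
    · intro t ht
      rw [(hd t).deriv]
      exact hG t (le_of_lt (by simpa using ht))
  exact mono self_mem_Ici hx hx

private lemma sin_ge_cubic (x : ℝ) (hx : 0 ≤ x) : x - x ^ 3 / 6 ≤ sin x := by
  have := aux_mono (fun t => sin t - (t - t ^ 3 / 6)) (fun t => cos t - (1 - t ^ 2 / 2))
    (fun t => by
      have := (Real.hasDerivAt_sin t).sub
        ((hasDerivAt_id t).sub ((hasDerivAt_pow 3 t).div_const 6))
      exact this.congr_deriv (by push_cast; ring))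
    (fun t _ => by linarith [Real.one_sub_sq_div_two_le_cos (x := t)]) hx
  simpa using this

private lemma cos_le_quartic (x : ℝ) (hx : 0 ≤ x) : cos x ≤ 1 - x ^ 2 / 2 + x ^ 4 / 24 := by
  have := aux_mono (fun t => 1 - t ^ 2 / 2 + t ^ 4 / 24 - cos t)
    (fun t => sin t - (t - t ^ 3 / 6))
    (fun t => by
      have := (((hasDerivAt_pow 2 t).div_const 2).const_sub 1 |>.add
        ((hasDerivAt_pow 4 t).div_const 24)).sub (Real.hasDerivAt_cos t)
      exact this.congr_deriv (by push_cast; ring))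
    (fun t ht => by linarith [sin_ge_cubic t ht]) hx
  simp at this; linarith

private lemma sin_le_quintic (x : ℝ) (hx : 0 ≤ x) : sin x ≤ x - x ^ 3 / 6 + x ^ 5 / 120 := by
  have := aux_mono (fun t => t - t ^ 3 / 6 + t ^ 5 / 120 - sin t)
    (fun t => 1 - t ^ 2 / 2 + t ^ 4 / 24 - cos t)
    (fun t => by
      have := (((hasDerivAt_id t).sub ((hasDerivAt_pow 3 t).div_const 6)).add
        ((hasDerivAt_pow 5 t).div_const 120)).sub (Real.hasDerivAt_sin t)
      exact this.congr_deriv (by push_cast; ring))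
    (fun t ht => by linarith [cos_le_quartic t ht]) hx
  simp at this; linarith

private lemma cos_ge_sextic (x : ℝ) (hx : 0 ≤ x) :
    1 - x ^ 2 / 2 + x ^ 4 / 24 - x ^ 6 / 720 ≤ cos x := by
  have := aux_mono (fun t => cos t - (1 - t ^ 2 / 2 + t ^ 4 / 24 - t ^ 6 / 720))
    (fun t => t - t ^ 3 / 6 + t ^ 5 / 120 - sin t)
    (fun t => by
      have := (Real.hasDerivAt_cos t).sub
        ((((hasDerivAt_pow 2 t).div_const 2).const_sub 1 |>.add
          ((hasDerivAt_pow 4 t).div_const 24)).sub ((hasDerivAt_pow 6 t).div_const 720))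
      exact this.congr_deriv (by push_cast; ring))
    (fun t ht => by linarith [sin_le_quintic t ht]) hx
  simp at this; linarith

private lemma sin_ge_septic (x : ℝ) (hx : 0 ≤ x) :
    x - x ^ 3 / 6 + x ^ 5 / 120 - x ^ 7 / 5040 ≤ sin x := by
  have := aux_mono (fun t => sin t - (t - t ^ 3 / 6 + t ^ 5 / 120 - t ^ 7 / 5040))
    (fun t => cos t - (1 - t ^ 2 / 2 + t ^ 4 / 24 - t ^ 6 / 720))
    (fun t => by
      have := (Real.hasDerivAt_sin t).sub
        ((((hasDerivAt_id t).sub ((hasDerivAt_pow 3 t).div_const 6)).add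
          ((hasDerivAt_pow 5 t).div_const 120)).sub ((hasDerivAt_pow 7 t).div_const 5040))
      exact this.congr_deriv (by push_cast; ring))
    (fun t ht => by linarith [cos_ge_sextic t ht]) hx
  simp at this; linarith

set_option maxHeartbeats 1000000 in
theorem stmt_16 (p : ℕ) (hp : 2 ≤ p) (y : ℝ) (hy0 : 0 < y) (hy1 : y < π / (2 * p)) :
    (p : ℝ) / 6 * ((1 - (p : ℝ) ^ 2) * y ^ 2 + 6) < sin (p * y) / sin y ∧
      sin (p * y) / sin y <
        (p : ℝ) - 4 / π ^ 2 * ((p : ℝ) - 1 / sin (π / (2 * p))) * p * y ^ 2 := by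
  set P := (p : ℝ) with hPdef
  have hP : (2:ℝ) ≤ P := by
    rw [hPdef]; exact_mod_cast hp
  have hP0 : (0:ℝ) < P := by linarith
  have h2P : (0:ℝ) < 2 * P := by linarith
  have h2py : 2 * P * y < π := by
    rw [lt_div_iff₀ h2P] at hy1; linarith
  have hPy : 0 < P * y := mul_pos hP0 hy0
  have hPy2 : P * y < π / 2 := by linarith
  have hyπ : y < π := by nlinarith
  have hs : 0 < sin y := sin_pos_of_pos_of_lt_pi hy0 hyπ
  have hS : 0 < sin (P * y) := sin_pos_of_pos_of_lt_pi hPy (by linarith [pi_pos])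
  have hπu : π < 3.1416 := by linarith [pi_lt_d6]
  have hπl : 3.1415 < π := by linarith [pi_gt_d6]
  have hπ2u : π ^ 2 < 9.8697 := by nlinarith
  have hsq : (2 * P * y) * (2 * P * y) < π * π :=
    mul_self_lt_mul_self (by positivity) h2py
  have hu : P ^ 2 * y ^ 2 < 2.468 := by nlinarith
  have hsl : y - y ^ 3 / 6 ≤ sin y := sin_ge_cubic y hy0.le
  have hsu : sin y ≤ y - y ^ 3 / 6 + y ^ 5 / 120 := sin_le_quintic y hy0.le
  have hSl : P * y - (P * y) ^ 3 / 6 + (P * y) ^ 5 / 120 - (P * y) ^ 7 / 5040 ≤ sin (P * y) :=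
    sin_ge_septic _ hPy.le
  have hSu : sin (P * y) ≤ P * y - (P * y) ^ 3 / 6 + (P * y) ^ 5 / 120 :=
    sin_le_quintic _ hPy.le
  constructor
  · -- lower bound
    rw [lt_div_iff₀ hs]
    rcases le_or_gt (P / 6 * ((1 - P ^ 2) * y ^ 2 + 6)) 0 with hL | hL
    · exact lt_of_le_of_lt (mul_nonpos_of_nonpos_of_nonneg hL hs.le) hS
    · have step : P / 6 * ((1 - P ^ 2) * y ^ 2 + 6) * sin y ≤
          P / 6 * ((1 - P ^ 2) * y ^ 2 + 6) * (y - y ^ 3 / 6 + y ^ 5 / 120) :=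
        mul_le_mul_of_nonneg_left hsu hL.le
      have B1 : P ^ 2 * y ^ 2 * (P ^ 5 * y ^ 5) < 2.468 * (P ^ 5 * y ^ 5) :=
        mul_lt_mul_of_pos_right hu (by positivity)
      have B3 : 0 < 9883 / 1260000 * P ^ 4 - P ^ 2 / 36 + 7 / 360 := by
        nlinarith [sq_nonneg (P ^ 2 - 4), hP, sq_nonneg (P - 2)]
      have B3y : 0 < P * y ^ 5 * (9883 / 1260000 * P ^ 4 - P ^ 2 / 36 + 7 / 360) :=
        mul_pos (by positivity) B3
      have B2 : 0 ≤ P * (P ^ 2 - 1) * y ^ 7 := by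
        apply mul_nonneg (mul_nonneg hP0.le (by nlinarith)) (by positivity)
      have key : P / 6 * ((1 - P ^ 2) * y ^ 2 + 6) * (y - y ^ 3 / 6 + y ^ 5 / 120) <
          P * y - (P * y) ^ 3 / 6 + (P * y) ^ 5 / 120 - (P * y) ^ 7 / 5040 := by
        have expand : P * y - (P * y) ^ 3 / 6 + (P * y) ^ 5 / 120 - (P * y) ^ 7 / 5040 -
            P / 6 * ((1 - P ^ 2) * y ^ 2 + 6) * (y - y ^ 3 / 6 + y ^ 5 / 120) =
            (1 / 5040) * (2.468 * (P ^ 5 * y ^ 5) - P ^ 2 * y ^ 2 * (P ^ 5 * y ^ 5)) +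
            P * y ^ 5 * (9883 / 1260000 * P ^ 4 - P ^ 2 / 36 + 7 / 360) +
            P * (P ^ 2 - 1) * y ^ 7 / 720 := by ring
        linarith [B1, B3y, B2, expand]
      linarith
  · -- upper bound
    rw [div_lt_iff₀ hs]
    have hσpos : 0 < sin (π / (2 * P)) := by
      apply sin_pos_of_pos_of_lt_pi (by positivity)
      rw [div_lt_iff₀ h2P]; nlinarith [pi_pos]
    have hσu : sin (π / (2 * P)) < π / (2 * P) := sin_lt (by positivity)
    have hσl : 1 / P ≤ sin (π / (2 * P)) := by
      have h := mul_le_sin (x := π / (2 * P)) (by positivity)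
        (by rw [div_le_div_iff₀ h2P (by norm_num : (0:ℝ) < 2)]; nlinarith [pi_pos])
      have e : 2 / π * (π / (2 * P)) = 1 / P := by
        field_simp
      linarith [e ▸ h]
    have h1σP : 1 / sin (π / (2 * P)) ≤ P := by
      rw [div_le_iff₀ hσpos]
      have := mul_le_mul_of_nonneg_left hσl hP0.le
      rw [mul_one_div, div_self (ne_of_gt hP0)] at this
      linarith
    have hc0 : 0 ≤ 4 / π ^ 2 * (P - 1 / sin (π / (2 * P))) :=
      mul_nonneg (by positivity) (by linarith)
    have h2Pπ : 2 * P / π ≤ 1 / sin (π / (2 * P)) := by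
      rw [div_le_div_iff₀ pi_pos hσpos]
      have h := hσu
      rw [lt_div_iff₀ h2P] at h
      nlinarith
    have hπ3 : 31.003 < π ^ 3 := by nlinarith
    have hc1 : 4 / π ^ 2 * (P - 1 / sin (π / (2 * P))) ≤ 1474 / 10000 * P := by
      have e1 : P - 1 / sin (π / (2 * P)) ≤ P - 2 * P / π := by linarith
      have e2 : 4 / π ^ 2 * (P - 1 / sin (π / (2 * P))) ≤ 4 / π ^ 2 * (P - 2 * P / π) :=
        mul_le_mul_of_nonneg_left e1 (by positivity)
      have e3 : 4 / π ^ 2 * (P - 2 * P / π) = (4 * π * P - 8 * P) / π ^ 3 := by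
        field_simp; ring
      have e4 : (4 * π - 8) ≤ 1474 / 10000 * π ^ 3 := by nlinarith
      have e5 : (4 * π * P - 8 * P) / π ^ 3 ≤ 1474 / 10000 * P := by
        rw [div_le_iff₀ (by positivity : (0:ℝ) < π ^ 3)]
        nlinarith [mul_le_mul_of_nonneg_right e4 hP0.le]
      linarith [e3 ▸ e2]
    set c := 4 / π ^ 2 * (P - 1 / sin (π / (2 * P))) with hcdef
    have A1 : P ^ 2 * y ^ 2 * (P ^ 3 * y ^ 3) < 2.468 * (P ^ 3 * y ^ 3) :=
      mul_lt_mul_of_pos_right hu (by positivity)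
    have A2 : c * (P * y ^ 3) ≤ 1474 / 10000 * P * (P * y ^ 3) :=
      mul_le_mul_of_nonneg_right hc1 (by positivity)
    have A3 : 0 ≤ c * (P * y ^ 5) := mul_nonneg hc0 (by positivity)
    have A4 : 0 < 1461 / 10000 * P ^ 2 - 1474 / 10000 * P - 1 / 6 := by nlinarith [sq_nonneg (P - 2)]
    have A4y : 0 < P * y ^ 3 * (1461 / 10000 * P ^ 2 - 1474 / 10000 * P - 1 / 6) :=
      mul_pos (by positivity) A4
    have key2 : P * y - (P * y) ^ 3 / 6 + (P * y) ^ 5 / 120 <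
        (P - c * P * y ^ 2) * (y - y ^ 3 / 6) := by
      have expand : (P - c * P * y ^ 2) * (y - y ^ 3 / 6) -
          (P * y - (P * y) ^ 3 / 6 + (P * y) ^ 5 / 120) =
          (1 / 120) * (2.468 * (P ^ 3 * y ^ 3) - P ^ 2 * y ^ 2 * (P ^ 3 * y ^ 3)) +
          (1474 / 10000 * P * (P * y ^ 3) - c * (P * y ^ 3)) +
          (1 / 6) * (c * (P * y ^ 5)) +
          P * y ^ 3 * (1461 / 10000 * P ^ 2 - 1474 / 10000 * P - 1 / 6) := by ring
      linarith [A1, A2, A3, A4y, expand]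
    have hfac : 0 ≤ P - c * P * y ^ 2 := by
      have A2' : c * (P * y ^ 2) ≤ 1474 / 10000 * P * (P * y ^ 2) :=
        mul_le_mul_of_nonneg_right hc1 (by positivity)
      nlinarith [hu, A2']
    have step : (P - c * P * y ^ 2) * (y - y ^ 3 / 6) ≤ (P - c * P * y ^ 2) * sin y :=
      mul_le_mul_of_nonneg_left hsl hfac
    linarith
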